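/- Let 0 < η < δ, let c ∈ ℝ^L, and define P(a) = a if ‖a‖ ≤ δ − η and P(a) = ((δ−η)/‖a‖)·a otherwise. Then any point of B_{c,δ} can be reached from any point of B_{c,δ} by consecutive draws in the proposal balls: for all a, b ∈ B_{c,δ} there exist an integer N ≥ 0 and points x_0 = a, x_1, …, x_N = b in ℝ^L such that for every j ∈ {0,…,N−1}, x_{j+1} ∈ B_{x̂_j, η} where x̂_j = P(x_j − c) + c. -/

import Mathlib

theorem ball_reachable_by_consecutive_proposal_draws
    {L : ℕ} (η δ : ℝ) (hη : 0 < η) (hηδ : η < δ) (c : EuclideanSpace ℝ (Fin L))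
    (P : EuclideanSpace ℝ (Fin L) → EuclideanSpace ℝ (Fin L))
    (hP : ∀ a, P a = if ‖a‖ ≤ δ - η then a else ((δ - η) / ‖a‖) • a)
    (a b : EuclideanSpace ℝ (Fin L)) (ha : ‖a - c‖ ≤ δ) (hb : ‖b - c‖ ≤ δ) :
    ∃ (N : ℕ) (x : ℕ → EuclideanSpace ℝ (Fin L)),
      x 0 = a ∧ x N = b ∧
      ∀ j < N, ‖x (j + 1) - (P (x j - c) + c)‖ ≤ η := by
  set r := δ - η with hrdef
  have hr : 0 < r := by simp [hrdef]; linarith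
  have hPnorm : ∀ v, ‖P v‖ ≤ r := by
    intro v
    rw [hP]
    split_ifs with h
    · exact h
    · push_neg at h
      have hv : 0 < ‖v‖ := lt_trans hr h
      rw [norm_smul, Real.norm_eq_abs, abs_of_pos (div_pos hr hv),
        div_mul_cancel₀ _ hv.ne']
  have hPclose : ∀ v, ‖v‖ ≤ δ → ‖v - P v‖ ≤ η := by
    intro v hv
    rw [hP]
    split_ifs with h
    · simp [hη.le]
    · push_neg at h
      have hv0 : 0 < ‖v‖ := lt_trans hr h
      have hone : v - (r / ‖v‖) • v = (1 - r / ‖v‖) • v := by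
        rw [sub_smul, one_smul]
      have h1 : r / ‖v‖ ≤ 1 := by rw [div_le_one hv0]; exact h.le
      rw [hone, norm_smul, Real.norm_eq_abs, abs_of_nonneg (by linarith),
        sub_mul, one_mul, div_mul_cancel₀ _ hv0.ne']
      simp only [hrdef]; linarith
  have hPfix : ∀ v, ‖v‖ ≤ r → P v = v := by
    intro v hv; rw [hP, if_pos hv]
  set A := P (a - c) with hA
  set B := P (b - c) with hB
  set d := ‖B - A‖ with hd
  have hd0 : 0 ≤ d := norm_nonneg _
  set M : ℕ := ⌈d / η⌉₊ + 1 with hM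
  have hM0 : 0 < (M : ℝ) := by positivity
  have hdM : d / M ≤ η := by
    rw [div_le_iff₀ hM0]
    have h1 : d / η ≤ (M : ℝ) := by
      calc d / η ≤ (⌈d / η⌉₊ : ℝ) := Nat.le_ceil _
        _ ≤ (M : ℝ) := by exact_mod_cast Nat.le_succ _
    calc d = (d / η) * η := by field_simp
      _ ≤ (M : ℝ) * η := mul_le_mul_of_nonneg_right h1 hη.le
      _ = η * M := mul_comm _ _
  -- segment points stay in the small ball
  have hseg : ∀ t : ℝ, 0 ≤ t → t ≤ 1 → ‖A + t • (B - A)‖ ≤ r := by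
    intro t ht0 ht1
    have : A + t • (B - A) = (1 - t) • A + t • B := by
      rw [sub_smul, one_smul, smul_sub]; abel
    rw [this]
    calc ‖(1 - t) • A + t • B‖ ≤ ‖(1 - t) • A‖ + ‖t • B‖ := norm_add_le _ _
      _ = (1 - t) * ‖A‖ + t * ‖B‖ := by
          rw [norm_smul, norm_smul, Real.norm_eq_abs, Real.norm_eq_abs,
            abs_of_nonneg (by linarith), abs_of_nonneg ht0]
      _ ≤ (1 - t) * r + t * r := by
          have := hPnorm (a - c); have := hPnorm (b - c)
          rw [← hA, ← hB] at *
          nlinarith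
      _ = r := by ring
  refine ⟨M + 2,
    fun j => if j = 0 then a else
      if j ≤ M + 1 then c + A + (((j : ℝ) - 1) / M) • (B - A) else b, ?_, ?_, ?_⟩
  · simp
  · have : ¬ (M + 2 ≤ M + 1) := by omega
    simp [this]
  · intro j hj
    rcases Nat.eq_zero_or_pos j with hj0 | hj1
    · -- j = 0 : step from a to c + A
      subst hj0
      have h1 : (1 : ℕ) ≤ M + 1 := by omega
      simp only [if_pos rfl, Nat.one_ne_zero, if_neg, if_pos h1, reduceIte]
      norm_num
      rw [← hA]
      have h0 : c + A - (A + c) = 0 := by abel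
      rw [h0, norm_zero]
      exact hη.le
    · rcases Nat.lt_or_ge j (M + 1) with hjM | hjM
      · -- 1 ≤ j ≤ M : walk along the segment
        have hjne : j ≠ 0 := by omega
        have hjle : j ≤ M + 1 := by omega
        have hj1le : j + 1 ≤ M + 1 := by omega
        simp only [if_neg hjne, if_pos hjle, if_neg (Nat.succ_ne_zero j), if_pos hj1le]
        set t : ℝ := ((j : ℝ) - 1) / M with ht
        have ht0 : 0 ≤ t := by
          apply div_nonneg _ hM0.le
          have : (1 : ℝ) ≤ (j : ℝ) := by exact_mod_cast hj1
          linarith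
        have ht1 : t ≤ 1 := by
          rw [ht, div_le_one hM0]
          have : (j : ℝ) ≤ (M : ℝ) + 1 := by exact_mod_cast hjle
          linarith
        have hfix : P (c + A + t • (B - A) - c) = A + t • (B - A) := by
          have : c + A + t • (B - A) - c = A + t • (B - A) := by abel
          rw [this, hPfix _ (hseg t ht0 ht1)]
        rw [hfix]
        have hs : (((j + 1 : ℕ) : ℝ) - 1) / M - t = 1 / M := by
          rw [ht]; push_cast; field_simp; ring
        have hdiff : c + A + ((((j + 1 : ℕ) : ℝ) - 1) / M) • (B - A)
            - (A + t • (B - A) + c) = ((1 : ℝ) / M) • (B - A) := by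
          rw [← hs, sub_smul]; abel
        rw [hdiff, norm_smul, Real.norm_eq_abs, abs_of_pos (by positivity)]
        calc (1 / (M : ℝ)) * ‖B - A‖ = d / M := by rw [← hd]; ring
          _ ≤ η := hdM
      · -- j = M + 1 : final step to b
        have hjeq : j = M + 1 := by omega
        subst hjeq
        have h1 : ¬ (M + 1 + 1 ≤ M + 1) := by omega
        simp only [if_neg (Nat.succ_ne_zero M), if_pos (le_refl (M + 1)),
          if_neg (Nat.succ_ne_zero (M + 1)), if_neg h1]
        have hcast : (((M + 1 : ℕ) : ℝ) - 1) / M = 1 := by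
          push_cast; field_simp; ring
        rw [hcast, one_smul]
        have hBe : c + A + (B - A) - c = B := by abel
        rw [hBe, hPfix _ (hPnorm (b - c))]
        have : b - (P (b - c) + c) = (b - c) - P (b - c) := by abel
        rw [this]
        exact hPclose _ hb
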